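/- The total energy of the sinc waveform over the whole real line equals π: ∫_{−∞}^{∞} (sin t / t)² dt = π. -/

import Mathlib

open MeasureTheory Set
open Real hiding sinc
open scoped FourierTransform

noncomputable def sinc (t : ℝ) : ℝ := if t = 0 then 1 else Real.sin t / t
noncomputable def tent (x : ℝ) : ℝ := max 0 (1 - |x|)

lemma tent_zero {x : ℝ} (hx : 1 ≤ |x|) : tent x = 0 := by
  unfold tent; rw [max_eq_left (by linarith)]

lemma tent_neg (x : ℝ) : tent (-x) = tent x := by unfold tent; rw [abs_neg]

lemma tent_cont : Continuous tent := by unfold tent; fun_prop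

lemma tent_hcs : HasCompactSupport tent :=
  HasCompactSupport.intro (isCompact_Icc (a := (-1:ℝ)) (b := 1)) (fun x hx => tent_zero (by
    simp only [mem_Icc, not_and_or, not_le] at hx
    cases abs_cases x <;> rcases hx with h | h <;> linarith))

lemma int_half (a : ℝ) :
    ∫ v in (0:ℝ)..1, (1 - v) * Real.cos (a * v) =
      if a = 0 then 1/2 else (1 - Real.cos a) / a ^ 2 := by
  split_ifs with ha
  · subst ha
    simp only [mul_zero, zero_mul, Real.cos_zero, mul_one]
    rw [intervalIntegral.integral_sub intervalIntegrable_const intervalIntegral.intervalIntegrable_id]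
    simp
    norm_num
  have key : ∀ v ∈ uIcc (0:ℝ) 1, HasDerivAt
      (fun v => (1 - v) * Real.sin (a*v)/a - Real.cos (a*v)/a^2)
      ((1 - v) * Real.cos (a * v)) v := by
    intro v _
    have h1 : HasDerivAt (fun v : ℝ => a * v) a v := by
      simpa using (hasDerivAt_id v).const_mul a
    have hs : HasDerivAt (fun v => Real.sin (a*v)) (Real.cos (a*v) * a) v :=
      (Real.hasDerivAt_sin (a*v)).comp v h1
    have hc : HasDerivAt (fun v => Real.cos (a*v)) (-Real.sin (a*v) * a) v :=
      (Real.hasDerivAt_cos (a*v)).comp v h1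
    have h2 : HasDerivAt (fun v : ℝ => (1 - v)) (-1) v := by
      simpa using (hasDerivAt_id v).const_sub 1
    have := ((h2.mul hs).div_const a).sub (hc.div_const (a^2))
    convert this using 1
    · rfl
    · rfl
    · rfl
    · field_simp; ring
  rw [intervalIntegral.integral_eq_sub_of_hasDerivAt key]
  · field_simp; simp; ring
  · apply ContinuousOn.intervalIntegrable; fun_prop

lemma cos_tent (w : ℝ) : ∫ v : ℝ, Real.cos (2*π*w*v) * tent v = sinc (π*w)^2 := by
  have hsupp : Function.support (fun v => Real.cos (2*π*w*v) * tent v) ⊆ Ioc (-1:ℝ) 1 := by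
    intro v hv
    simp only [Function.mem_support] at hv
    by_contra hmem
    simp only [mem_Ioc, not_and_or, not_lt, not_le] at hmem
    refine hv ?_
    have : tent v = 0 := tent_zero (by cases abs_cases v <;> rcases hmem with h | h <;> linarith)
    rw [this, mul_zero]
  rw [← intervalIntegral.integral_eq_integral_of_support_subset hsupp]
  have hsplit := intervalIntegral.integral_add_adjacent_intervals
    (f := fun v => Real.cos (2*π*w*v) * tent v) (a := (-1:ℝ)) (b := 0) (c := 1) (μ := volume)
    (by apply ContinuousOn.intervalIntegrable
        exact (Continuous.comp Real.continuous_cos (by fun_prop)).mul tent_cont |>.continuousOn)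
    (by apply ContinuousOn.intervalIntegrable
        exact (Continuous.comp Real.continuous_cos (by fun_prop)).mul tent_cont |>.continuousOn)
  rw [← hsplit]
  have e1 : ∫ v in (0:ℝ)..1, Real.cos (2*π*w*v) * tent v
      = ∫ v in (0:ℝ)..1, (1 - v) * Real.cos ((2*π*w) * v) := by
    apply intervalIntegral.integral_congr
    intro v hv
    rw [uIcc_of_le (by norm_num)] at hv
    show Real.cos (2*π*w*v) * tent v = (1 - v) * Real.cos (2*π*w*v)
    unfold tent
    rw [abs_of_nonneg hv.1, max_eq_right (by linarith [hv.2])]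
    ring
  have e2 : ∫ v in (-1:ℝ)..0, Real.cos (2*π*w*v) * tent v
      = ∫ v in (0:ℝ)..1, (1 - v) * Real.cos ((2*π*w) * v) := by
    have h3 := intervalIntegral.integral_comp_neg (a := (0:ℝ)) (b := 1)
      (fun v => Real.cos (2*π*w*v) * tent v)
    rw [neg_zero] at h3
    simp only [mul_neg, Real.cos_neg, tent_neg] at h3
    rw [← h3]
    exact e1
  rw [e1, e2, int_half]
  have hπ := Real.pi_pos
  split_ifs with ha
  · have hw : w = 0 := by
      by_contra h
      exact (mul_ne_zero (mul_ne_zero two_ne_zero Real.pi_ne_zero) h) ha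
    subst hw
    norm_num [sinc]
  · have hw : w ≠ 0 := by rintro rfl; simp at ha
    have hπw : π * w ≠ 0 := by positivity
    rw [sinc, if_neg hπw]
    have hcos : Real.cos (2*π*w) = 1 - 2 * Real.sin (π*w)^2 := by
      have : Real.cos (2*(π*w)) = 2 * Real.cos (π*w)^2 - 1 := Real.cos_two_mul (π*w)
      rw [show 2*π*w = 2*(π*w) by ring, this]
      nlinarith [Real.sin_sq_add_cos_sq (π*w)]
    rw [hcos]
    field_simp
    ring

lemma intCos (w : ℝ) : Integrable (fun v => Real.cos (2*π*w*v) * tent v) :=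
  Continuous.integrable_of_hasCompactSupport
    ((Real.continuous_cos.comp (by fun_prop)).mul tent_cont) tent_hcs.mul_left

lemma intSin (w : ℝ) : Integrable (fun v => Real.sin (2*π*w*v) * tent v) :=
  Continuous.integrable_of_hasCompactSupport
    ((Real.continuous_sin.comp (by fun_prop)).mul tent_cont) tent_hcs.mul_left

lemma sin_tent (w : ℝ) : ∫ v : ℝ, Real.sin (2*π*w*v) * tent v = 0 := by
  have h := integral_neg_eq_self (fun v => Real.sin (2*π*w*v) * tent v) (volume : Measure ℝ)
  simp only [mul_neg, Real.sin_neg, tent_neg, neg_mul] at h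
  linarith [integral_neg (μ := (volume : Measure ℝ)) (fun v => Real.sin (2*π*w*v) * tent v), h]

lemma fourier_tent (w : ℝ) :
    𝓕 (fun x : ℝ => (tent x : ℂ)) w = ((sinc (π * w))^2 : ℝ) := by
  rw [Real.fourier_real_eq_integral_exp_smul]
  have hpt : ∀ v : ℝ, Complex.exp (↑(-2 * π * v * w) * Complex.I) • (tent v : ℂ)
      = ((Real.cos (2*π*w*v) * tent v : ℝ) : ℂ)
        - ((Real.sin (2*π*w*v) * tent v : ℝ) : ℂ) * Complex.I := by
    intro v
    rw [smul_eq_mul, Complex.exp_mul_I]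
    have e : ((-2 * π * v * w : ℝ) : ℂ) = ((-(2*π*w*v) : ℝ) : ℂ) := by push_cast; ring
    rw [e, ← Complex.ofReal_cos, ← Complex.ofReal_sin, Real.cos_neg, Real.sin_neg]
    push_cast
    ring
  simp_rw [hpt]
  have h1 : Integrable (fun v : ℝ => ((Real.cos (2*π*w*v) * tent v : ℝ) : ℂ)) := (intCos w).ofReal
  have h2 : Integrable (fun v : ℝ => ((Real.sin (2*π*w*v) * tent v : ℝ) : ℂ) * Complex.I) :=
    ((intSin w).ofReal).mul_const Complex.I
  have hc1 : ∫ v : ℝ, ((Real.cos (2*π*w*v) * tent v : ℝ) : ℂ)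
      = ((∫ v : ℝ, Real.cos (2*π*w*v) * tent v : ℝ) : ℂ) := integral_ofReal
  have hc2 : ∫ v : ℝ, ((Real.sin (2*π*w*v) * tent v : ℝ) : ℂ)
      = ((∫ v : ℝ, Real.sin (2*π*w*v) * tent v : ℝ) : ℂ) := integral_ofReal
  rw [integral_sub h1 h2, integral_mul_const, hc1, hc2, cos_tent, sin_tent]
  simp

lemma sinc_ae : (fun t : ℝ => sinc t ^ 2) =ᵐ[volume] fun t => (Real.sin t / t)^2 := by
  have h0 : ∀ᵐ t : ℝ ∂volume, t ≠ 0 := by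
    rw [ae_iff]
    simp only [ne_eq, not_not, setOf_eq_eq_singleton]
    exact measure_singleton 0
  filter_upwards [h0] with t ht
  rw [sinc, if_neg ht]

lemma integrable_sinc_sq : Integrable (fun t : ℝ => sinc t ^ 2) := by
  refine Integrable.congr ?_ sinc_ae.symm
  apply Integrable.mono' (integrable_inv_one_add_sq.const_mul 2)
  · exact ((Real.measurable_sin.div measurable_id).pow_const 2).aestronglyMeasurable
  · filter_upwards with t
    rw [Real.norm_eq_abs, abs_of_nonneg (sq_nonneg _)]
    rcases eq_or_ne t 0 with rfl | ht
    · simp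
    · have h1 : Real.sin t ^ 2 ≤ t ^ 2 := by
        have := Real.abs_sin_le_abs (x := t)
        nlinarith [abs_nonneg (Real.sin t), abs_nonneg t, sq_abs t, sq_abs (Real.sin t)]
      have h2 : Real.sin t ^ 2 ≤ 1 := Real.sin_sq_le_one t
      have ht2 : (0:ℝ) < t ^ 2 := by positivity
      rw [div_pow, ← div_eq_mul_inv, div_le_div_iff₀ ht2 (by positivity)]
      nlinarith

theorem sinc_total_energy : ∫ t : ℝ, (sinc t) ^ 2 = Real.pi := by
  have hf_cont : Continuous (fun x : ℝ => (tent x : ℂ)) := Complex.continuous_ofReal.comp tent_cont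
  have hf_int : Integrable (fun x : ℝ => (tent x : ℂ)) :=
    (tent_cont.integrable_of_hasCompactSupport tent_hcs).ofReal
  have hFf : 𝓕 (fun x : ℝ => (tent x : ℂ)) = fun w : ℝ => (((sinc (π * w))^2 : ℝ) : ℂ) :=
    funext fourier_tent
  have h'f : Integrable (𝓕 (fun x : ℝ => (tent x : ℂ))) := by
    rw [hFf]
    exact (integrable_sinc_sq.comp_mul_left' Real.pi_ne_zero).ofReal
  have hinv := hf_cont.fourierInv_fourier_eq hf_int h'f
  have h0 : 𝓕⁻ (𝓕 (fun x : ℝ => (tent x : ℂ))) 0 = ((tent 0 : ℝ) : ℂ) := by rw [hinv]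
  rw [hFf] at h0
  have heval : 𝓕⁻ (fun w : ℝ => (((sinc (π * w))^2 : ℝ) : ℂ)) 0
      = ∫ w : ℝ, (((sinc (π * w))^2 : ℝ) : ℂ) := by
    rw [Real.fourierInv_eq]
    simp
  rw [heval] at h0
  have hcast : ∫ w : ℝ, (((sinc (π * w))^2 : ℝ) : ℂ)
      = ((∫ w : ℝ, sinc (π * w)^2 : ℝ) : ℂ) := integral_ofReal
  rw [hcast, show tent 0 = 1 by unfold tent; norm_num] at h0
  have h1 : ∫ w : ℝ, sinc (π * w)^2 = 1 := by exact_mod_cast h0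
  have h2 := MeasureTheory.Measure.integral_comp_mul_left (fun t => sinc t ^ 2) π
  rw [h1, abs_of_pos (inv_pos.2 Real.pi_pos), smul_eq_mul] at h2
  field_simp at h2
  linarith [Real.pi_pos]
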